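/- Let $x_1, x_2$ be i.i.d. with law $S\,\delta_0 + (1-S)\,\mathrm{Unif}(0,1]$ for $S \in [0,1)$. Then $\mathbb{E}[x_1 - x_2 \mid x_1 \le x_2] = -\frac{1}{3}\frac{(1-S)(1+2S)}{1+S^2}$ and $\mathbb{E}[x_1 - x_2 \mid x_1 > x_2] = \frac{1}{3}\frac{1+2S}{1+S}$. -/

import Mathlib

open MeasureTheory ProbabilityTheory Set
open scoped ENNReal

/-- The sparse-uniform mixture law `S·δ₀ + (1-S)·Unif(0,1]`. -/
noncomputable def mixLaw (S : ℝ) : Measure ℝ :=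
  (ENNReal.ofReal S) • Measure.dirac 0 +
    (ENNReal.ofReal (1 - S)) • (volume.restrict (Set.Ioc (0:ℝ) 1))

lemma smul_prod_meas (c : ℝ≥0∞) (μ ν : Measure ℝ) [SFinite μ] [SFinite ν] :
    (c • μ).prod ν = c • (μ.prod ν) := by
  ext s hs
  rw [Measure.prod_apply hs, Measure.smul_apply, Measure.prod_apply hs,
    MeasureTheory.lintegral_smul_measure, smul_eq_mul]

lemma prod_smul_meas (c : ℝ≥0∞) (μ ν : Measure ℝ) [SFinite μ] [SFinite ν] :
    μ.prod (c • ν) = c • (μ.prod ν) := by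
  ext s hs
  rw [Measure.prod_apply hs, Measure.smul_apply, Measure.prod_apply hs, smul_eq_mul,
    ← lintegral_const_mul _ (measurable_measure_prodMk_left hs)]
  simp [Measure.smul_apply]

lemma mixLaw_prob (S : ℝ) (hS : S ∈ Set.Ico (0:ℝ) 1) :
    IsProbabilityMeasure (mixLaw S) := by
  constructor
  simp only [mixLaw, Measure.add_apply, Measure.smul_apply, smul_eq_mul]
  rw [Measure.dirac_apply' _ MeasurableSet.univ, Measure.restrict_apply MeasurableSet.univ]
  simp only [Set.indicator_of_mem (Set.mem_univ _), Set.univ_inter, Real.volume_Ioc]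
  rw [Pi.one_apply, mul_one]
  norm_num
  rw [← ENNReal.ofReal_add hS.1 (by linarith [hS.2])]
  norm_num

lemma mixLaw_prod_eq (S : ℝ) :
    (mixLaw S).prod (mixLaw S) =
      (ENNReal.ofReal S * ENNReal.ofReal S) • Measure.dirac ((0:ℝ), (0:ℝ))
      + (ENNReal.ofReal S * ENNReal.ofReal (1 - S)) •
          ((volume.restrict (Set.Ioc (0:ℝ) 1)).map (Prod.mk (0:ℝ)))
      + (ENNReal.ofReal (1 - S) * ENNReal.ofReal S) •
          ((volume.restrict (Set.Ioc (0:ℝ) 1)).map (fun x => (x, (0:ℝ))))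
      + (ENNReal.ofReal (1 - S) * ENNReal.ofReal (1 - S)) •
          ((volume.restrict (Set.Ioc (0:ℝ) 1)).prod (volume.restrict (Set.Ioc (0:ℝ) 1))) := by
  rw [mixLaw]
  rw [Measure.add_prod, smul_prod_meas, smul_prod_meas, Measure.prod_add, Measure.prod_add,
    prod_smul_meas, prod_smul_meas, prod_smul_meas, prod_smul_meas,
    Measure.dirac_prod_dirac, Measure.dirac_prod, Measure.prod_dirac]
  simp only [smul_add, smul_smul]
  abel

set_option maxHeartbeats 1000000 in
lemma mix_setIntegral (S : ℝ) (hS : S ∈ Set.Ico (0:ℝ) 1)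
    (g : ℝ × ℝ → ℝ) (hg : Continuous g) (T : Set (ℝ × ℝ)) (hT : MeasurableSet T) :
    ∫ p in T, g p ∂((mixLaw S).prod (mixLaw S)) =
      S * S * T.indicator g (0, 0)
      + S * (1 - S) * (∫ y in Ioc (0:ℝ) 1, T.indicator g (0, y))
      + (1 - S) * S * (∫ x in Ioc (0:ℝ) 1, T.indicator g (x, 0))
      + (1 - S) * (1 - S) * (∫ x in Ioc (0:ℝ) 1, ∫ y in Ioc (0:ℝ) 1, T.indicator g (x, y)) := by
  classical
  have h0 : (0:ℝ) ≤ S := hS.1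
  have h1 : (0:ℝ) ≤ 1 - S := by linarith [hS.2]
  set U := volume.restrict (Set.Ioc (0:ℝ) 1) with hU
  have hI1 : Integrable g (Measure.dirac ((0:ℝ), (0:ℝ))) := by
    refine ⟨hg.aestronglyMeasurable, ?_⟩
    rw [HasFiniteIntegral, lintegral_dirac]
    exact ENNReal.coe_lt_top
  have hI2 : Integrable (fun y => g (0, y)) U :=
    (hg.comp (Continuous.prodMk_right 0)).integrableOn_Ioc
  have hI3 : Integrable (fun x => g (x, 0)) U :=
    (hg.comp (continuous_id.prodMk continuous_const)).integrableOn_Ioc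
  have hI2' : Integrable g (U.map (Prod.mk (0:ℝ))) := by
    rw [integrable_map_measure hg.aestronglyMeasurable measurable_prodMk_left.aemeasurable]
    exact hI2
  have hI3' : Integrable g (U.map (fun x => (x, (0:ℝ)))) := by
    rw [integrable_map_measure hg.aestronglyMeasurable measurable_prodMk_right.aemeasurable]
    exact hI3
  have hI4 : Integrable g (U.prod U) := by
    rw [hU, Measure.prod_restrict, ← Measure.volume_eq_prod]
    refine IntegrableOn.mono_set ?_ (Set.prod_mono Set.Ioc_subset_Icc_self Set.Ioc_subset_Icc_self)
    exact ContinuousOn.integrableOn_compact (isCompact_Icc.prod isCompact_Icc) hg.continuousOn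
  have hne : ∀ a b : ℝ, ENNReal.ofReal a * ENNReal.ofReal b ≠ ⊤ :=
    fun a b => ENNReal.mul_ne_top ENNReal.ofReal_ne_top ENNReal.ofReal_ne_top
  have J1 : Integrable g ((ENNReal.ofReal S * ENNReal.ofReal S) •
      (Measure.dirac ((0:ℝ),(0:ℝ))).restrict T) := hI1.restrict.smul_measure (hne _ _)
  have J2 : Integrable g ((ENNReal.ofReal S * ENNReal.ofReal (1-S)) •
      (U.map (Prod.mk (0:ℝ))).restrict T) := hI2'.restrict.smul_measure (hne _ _)
  have J3 : Integrable g ((ENNReal.ofReal (1-S) * ENNReal.ofReal S) •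
      (U.map (fun x => (x,(0:ℝ)))).restrict T) := hI3'.restrict.smul_measure (hne _ _)
  have J4 : Integrable g ((ENNReal.ofReal (1-S) * ENNReal.ofReal (1-S)) •
      (U.prod U).restrict T) := hI4.restrict.smul_measure (hne _ _)
  rw [mixLaw_prod_eq, Measure.restrict_add, Measure.restrict_add, Measure.restrict_add,
    Measure.restrict_smul, Measure.restrict_smul, Measure.restrict_smul, Measure.restrict_smul,
    integral_add_measure ((J1.add_measure J2).add_measure J3) J4,
    integral_add_measure (J1.add_measure J2) J3,
    integral_add_measure J1 J2,
    integral_smul_measure, integral_smul_measure, integral_smul_measure, integral_smul_measure]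
  have htr : ∀ a b : ℝ, 0 ≤ a → 0 ≤ b → (ENNReal.ofReal a * ENNReal.ofReal b).toReal = a * b := by
    intro a b ha hb
    rw [ENNReal.toReal_mul, ENNReal.toReal_ofReal ha, ENNReal.toReal_ofReal hb]
  rw [htr _ _ h0 h0, htr _ _ h0 h1, htr _ _ h1 h0, htr _ _ h1 h1]
  have e1 : ∫ p in T, g p ∂(Measure.dirac ((0:ℝ),(0:ℝ))) = T.indicator g (0,0) :=
    setIntegral_dirac' hg.stronglyMeasurable _ hT
  have key : ∀ y : ℝ, (Prod.mk (0:ℝ) ⁻¹' T).indicator (fun y => g (0, y)) y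
      = T.indicator g (0, y) := by
    intro y; by_cases h : ((0:ℝ), y) ∈ T <;> simp [Set.indicator, Set.mem_preimage, h]
  have key' : ∀ x : ℝ, ((fun x => (x,(0:ℝ))) ⁻¹' T).indicator (fun x => g (x, 0)) x
      = T.indicator g (x, 0) := by
    intro x; by_cases h : (x, (0:ℝ)) ∈ T <;> simp [Set.indicator, Set.mem_preimage, h]
  have e2 : ∫ p in T, g p ∂(U.map (Prod.mk (0:ℝ)))
      = ∫ y in Ioc (0:ℝ) 1, T.indicator g (0, y) := by
    rw [setIntegral_map hT hg.aestronglyMeasurable measurable_prodMk_left.aemeasurable]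
    rw [hU, Measure.restrict_restrict (measurable_prodMk_left hT)]
    rw [show (Prod.mk (0:ℝ) ⁻¹' T) ∩ Ioc (0:ℝ) 1 = Ioc (0:ℝ) 1 ∩ (Prod.mk (0:ℝ) ⁻¹' T) from
      Set.inter_comm _ _]
    rw [← setIntegral_indicator (measurable_prodMk_left hT)]
    exact setIntegral_congr_fun measurableSet_Ioc (fun y _ => key y)
  have e3 : ∫ p in T, g p ∂(U.map (fun x => (x,(0:ℝ))))
      = ∫ x in Ioc (0:ℝ) 1, T.indicator g (x, 0) := by
    rw [setIntegral_map hT hg.aestronglyMeasurable measurable_prodMk_right.aemeasurable]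
    rw [hU, Measure.restrict_restrict (measurable_prodMk_right hT)]
    rw [show ((fun x => (x,(0:ℝ))) ⁻¹' T) ∩ Ioc (0:ℝ) 1 = Ioc (0:ℝ) 1 ∩ ((fun x => (x,(0:ℝ))) ⁻¹' T) from
      Set.inter_comm _ _]
    rw [← setIntegral_indicator (measurable_prodMk_right hT)]
    exact setIntegral_congr_fun measurableSet_Ioc (fun x _ => key' x)
  have e4 : ∫ p in T, g p ∂(U.prod U)
      = ∫ x in Ioc (0:ℝ) 1, ∫ y in Ioc (0:ℝ) 1, T.indicator g (x, y) := by
    rw [← integral_indicator hT, MeasureTheory.integral_prod _ (hI4.indicator hT)]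
  rw [e1, e2, e3, e4]
  simp only [smul_eq_mul]
  rfl

lemma hT1 : MeasurableSet {p : ℝ × ℝ | p.1 ≤ p.2} := measurableSet_le measurable_fst measurable_snd
lemma hT2 : MeasurableSet {p : ℝ × ℝ | p.2 < p.1} := measurableSet_lt measurable_snd measurable_fst

lemma eval_sub_le (S : ℝ) (hS : S ∈ Set.Ico (0:ℝ) 1) :
    ∫ p in {p : ℝ × ℝ | p.1 ≤ p.2}, (p.1 - p.2) ∂((mixLaw S).prod (mixLaw S)) = -((1-S)*(1+2*S)/6) := by
  rw [mix_setIntegral S hS (fun p => p.1 - p.2) (continuous_fst.sub continuous_snd) _ hT1]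
  have e1 : ({p : ℝ × ℝ | p.1 ≤ p.2}).indicator (fun p : ℝ × ℝ => p.1 - p.2) ((0:ℝ), (0:ℝ)) = 0 := by
    simp [Set.indicator]
  have e2 : (∫ y in Ioc (0:ℝ) 1,
      ({p : ℝ × ℝ | p.1 ≤ p.2}).indicator (fun p : ℝ × ℝ => p.1 - p.2) (0, y)) = -(1/2) := by
    rw [setIntegral_congr_fun measurableSet_Ioc (g := fun y => 0 - y)
      (fun y hy => by simp [Set.indicator, hy.1.le])]
    rw [← intervalIntegral.integral_of_le zero_le_one]
    simp only [zero_sub]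
    rw [intervalIntegral.integral_neg, integral_id]
    norm_num
  have e3 : (∫ x in Ioc (0:ℝ) 1,
      ({p : ℝ × ℝ | p.1 ≤ p.2}).indicator (fun p : ℝ × ℝ => p.1 - p.2) (x, 0)) = 0 := by
    rw [setIntegral_congr_fun measurableSet_Ioc (g := fun _ => (0:ℝ))
      (fun x hx => by simp [Set.indicator, not_le.mpr hx.1])]
    exact integral_zero _ _
  have e4 : (∫ x in Ioc (0:ℝ) 1, ∫ y in Ioc (0:ℝ) 1,
      ({p : ℝ × ℝ | p.1 ≤ p.2}).indicator (fun p : ℝ × ℝ => p.1 - p.2) (x, y)) = -(1/6) := by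
    rw [setIntegral_congr_fun measurableSet_Ioc (g := fun x => x - x^2/2 - 1/2) ?_]
    · rw [← intervalIntegral.integral_of_le zero_le_one]
      have h1 : IntervalIntegrable (fun x : ℝ => x) volume 0 1 :=
        intervalIntegral.intervalIntegrable_id
      have h2 : IntervalIntegrable (fun x : ℝ => x^2/2) volume 0 1 :=
        ((continuous_pow 2).div_const 2).intervalIntegrable 0 1
      rw [intervalIntegral.integral_sub (h1.sub h2) intervalIntegrable_const,
        intervalIntegral.integral_sub h1 h2,
        intervalIntegral.integral_div, integral_id, integral_pow]
      norm_num
    · intro x hx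
      have hin : ∀ y : ℝ, ({p : ℝ × ℝ | p.1 ≤ p.2}).indicator (fun p : ℝ × ℝ => p.1 - p.2) (x, y)
          = (Ici x).indicator (fun y => x - y) y := by
        intro y; by_cases h : x ≤ y <;> simp [Set.indicator, h]
      simp only [hin]
      rw [setIntegral_indicator measurableSet_Ici,
        show Ioc (0:ℝ) 1 ∩ Ici x = Icc x 1 by
          ext y
          exact ⟨fun ⟨⟨_, h2⟩, h3⟩ => ⟨h3, h2⟩, fun ⟨a, b⟩ => ⟨⟨lt_of_lt_of_le hx.1 a, b⟩, a⟩⟩,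
        integral_Icc_eq_integral_Ioc, ← intervalIntegral.integral_of_le hx.2,
        intervalIntegral.integral_sub intervalIntegrable_const
          intervalIntegral.intervalIntegrable_id,
        intervalIntegral.integral_const, integral_id]
      simp only [smul_eq_mul]; ring
  rw [e1, e2, e3, e4]; ring

lemma eval_one_le (S : ℝ) (hS : S ∈ Set.Ico (0:ℝ) 1) :
    ∫ p in {p : ℝ × ℝ | p.1 ≤ p.2}, (1:ℝ) ∂((mixLaw S).prod (mixLaw S)) = (1 + S^2)/2 := by
  rw [mix_setIntegral S hS (fun _ => (1:ℝ)) continuous_const _ hT1]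
  have e1 : ({p : ℝ × ℝ | p.1 ≤ p.2}).indicator (fun _ : ℝ × ℝ => (1:ℝ)) ((0:ℝ), (0:ℝ)) = 1 := by
    simp [Set.indicator]
  have e2 : (∫ y in Ioc (0:ℝ) 1,
      ({p : ℝ × ℝ | p.1 ≤ p.2}).indicator (fun _ : ℝ × ℝ => (1:ℝ)) (0, y)) = 1 := by
    rw [setIntegral_congr_fun measurableSet_Ioc (g := fun _ => (1:ℝ))
      (fun y hy => by simp [Set.indicator, hy.1.le])]
    simp
  have e3 : (∫ x in Ioc (0:ℝ) 1,
      ({p : ℝ × ℝ | p.1 ≤ p.2}).indicator (fun _ : ℝ × ℝ => (1:ℝ)) (x, 0)) = 0 := by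
    rw [setIntegral_congr_fun measurableSet_Ioc (g := fun _ => (0:ℝ))
      (fun x hx => by simp [Set.indicator, not_le.mpr hx.1])]
    exact integral_zero _ _
  have e4 : (∫ x in Ioc (0:ℝ) 1, ∫ y in Ioc (0:ℝ) 1,
      ({p : ℝ × ℝ | p.1 ≤ p.2}).indicator (fun _ : ℝ × ℝ => (1:ℝ)) (x, y)) = 1/2 := by
    rw [setIntegral_congr_fun measurableSet_Ioc (g := fun x => 1 - x) ?_]
    · rw [← intervalIntegral.integral_of_le zero_le_one,
        intervalIntegral.integral_sub intervalIntegrable_const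
          intervalIntegral.intervalIntegrable_id,
        intervalIntegral.integral_const, integral_id]
      norm_num
    · intro x hx
      have hin : ∀ y : ℝ, ({p : ℝ × ℝ | p.1 ≤ p.2}).indicator (fun _ : ℝ × ℝ => (1:ℝ)) (x, y)
          = (Ici x).indicator (fun _ => (1:ℝ)) y := by
        intro y; by_cases h : x ≤ y <;> simp [Set.indicator, h]
      simp only [hin]
      rw [setIntegral_indicator measurableSet_Ici,
        show Ioc (0:ℝ) 1 ∩ Ici x = Icc x 1 by
          ext y
          exact ⟨fun ⟨⟨_, h2⟩, h3⟩ => ⟨h3, h2⟩, fun ⟨a, b⟩ => ⟨⟨lt_of_lt_of_le hx.1 a, b⟩, a⟩⟩]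
      rw [setIntegral_const]
      simp [Real.volume_Icc, ENNReal.toReal_ofReal (by linarith [hx.2] : (0:ℝ) ≤ 1 - x)]
      exact hx.2
  rw [e1, e2, e3, e4]; ring

lemma eval_sub_gt (S : ℝ) (hS : S ∈ Set.Ico (0:ℝ) 1) :
    ∫ p in {p : ℝ × ℝ | p.2 < p.1}, (p.1 - p.2) ∂((mixLaw S).prod (mixLaw S)) = (1-S)*(1+2*S)/6 := by
  rw [mix_setIntegral S hS (fun p => p.1 - p.2) (continuous_fst.sub continuous_snd) _ hT2]
  have e1 : ({p : ℝ × ℝ | p.2 < p.1}).indicator (fun p : ℝ × ℝ => p.1 - p.2) ((0:ℝ), (0:ℝ)) = 0 := by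
    simp [Set.indicator]
  have e2 : (∫ y in Ioc (0:ℝ) 1,
      ({p : ℝ × ℝ | p.2 < p.1}).indicator (fun p : ℝ × ℝ => p.1 - p.2) (0, y)) = 0 := by
    rw [setIntegral_congr_fun measurableSet_Ioc (g := fun _ => (0:ℝ))
      (fun y hy => by simp [Set.indicator, not_lt.mpr hy.1.le])]
    exact integral_zero _ _
  have e3 : (∫ x in Ioc (0:ℝ) 1,
      ({p : ℝ × ℝ | p.2 < p.1}).indicator (fun p : ℝ × ℝ => p.1 - p.2) (x, 0)) = 1/2 := by
    rw [setIntegral_congr_fun measurableSet_Ioc (g := fun x => x) ?_]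
    · rw [← intervalIntegral.integral_of_le zero_le_one, integral_id]; norm_num
    · intro x hx
      simp [Set.indicator, hx.1]
  have e4 : (∫ x in Ioc (0:ℝ) 1, ∫ y in Ioc (0:ℝ) 1,
      ({p : ℝ × ℝ | p.2 < p.1}).indicator (fun p : ℝ × ℝ => p.1 - p.2) (x, y)) = 1/6 := by
    rw [setIntegral_congr_fun measurableSet_Ioc (g := fun x => x^2/2) ?_]
    · rw [← intervalIntegral.integral_of_le zero_le_one, intervalIntegral.integral_div,
        integral_pow]
      norm_num
    · intro x hx
      have hin : ∀ y : ℝ, ({p : ℝ × ℝ | p.2 < p.1}).indicator (fun p : ℝ × ℝ => p.1 - p.2) (x, y)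
          = (Iio x).indicator (fun y => x - y) y := by
        intro y; by_cases h : y < x <;> simp [Set.indicator, h]
      simp only [hin]
      rw [setIntegral_indicator measurableSet_Iio,
        show Ioc (0:ℝ) 1 ∩ Iio x = Ioo 0 x by
          ext y
          exact ⟨fun ⟨⟨h1, _⟩, h3⟩ => ⟨h1, h3⟩,
            fun ⟨a, b⟩ => ⟨⟨a, le_trans (le_of_lt b) hx.2⟩, b⟩⟩]
      rw [← integral_Ioc_eq_integral_Ioo, ← intervalIntegral.integral_of_le (le_of_lt hx.1),
        intervalIntegral.integral_sub intervalIntegrable_const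
          intervalIntegral.intervalIntegrable_id,
        intervalIntegral.integral_const, integral_id]
      simp only [smul_eq_mul]; ring
  rw [e1, e2, e3, e4]; ring

lemma eval_one_gt (S : ℝ) (hS : S ∈ Set.Ico (0:ℝ) 1) :
    ∫ p in {p : ℝ × ℝ | p.2 < p.1}, (1:ℝ) ∂((mixLaw S).prod (mixLaw S)) = (1-S)*(1+S)/2 := by
  rw [mix_setIntegral S hS (fun _ => (1:ℝ)) continuous_const _ hT2]
  have e1 : ({p : ℝ × ℝ | p.2 < p.1}).indicator (fun _ : ℝ × ℝ => (1:ℝ)) ((0:ℝ), (0:ℝ)) = 0 := by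
    simp [Set.indicator]
  have e2 : (∫ y in Ioc (0:ℝ) 1,
      ({p : ℝ × ℝ | p.2 < p.1}).indicator (fun _ : ℝ × ℝ => (1:ℝ)) (0, y)) = 0 := by
    rw [setIntegral_congr_fun measurableSet_Ioc (g := fun _ => (0:ℝ))
      (fun y hy => by simp [Set.indicator, not_lt.mpr hy.1.le])]
    exact integral_zero _ _
  have e3 : (∫ x in Ioc (0:ℝ) 1,
      ({p : ℝ × ℝ | p.2 < p.1}).indicator (fun _ : ℝ × ℝ => (1:ℝ)) (x, 0)) = 1 := by
    rw [setIntegral_congr_fun measurableSet_Ioc (g := fun _ => (1:ℝ))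
      (fun x hx => by simp [Set.indicator, hx.1])]
    simp
  have e4 : (∫ x in Ioc (0:ℝ) 1, ∫ y in Ioc (0:ℝ) 1,
      ({p : ℝ × ℝ | p.2 < p.1}).indicator (fun _ : ℝ × ℝ => (1:ℝ)) (x, y)) = 1/2 := by
    rw [setIntegral_congr_fun measurableSet_Ioc (g := fun x => x) ?_]
    · rw [← intervalIntegral.integral_of_le zero_le_one, integral_id]; norm_num
    · intro x hx
      have hin : ∀ y : ℝ, ({p : ℝ × ℝ | p.2 < p.1}).indicator (fun _ : ℝ × ℝ => (1:ℝ)) (x, y)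
          = (Iio x).indicator (fun _ => (1:ℝ)) y := by
        intro y; by_cases h : y < x <;> simp [Set.indicator, h]
      simp only [hin]
      rw [setIntegral_indicator measurableSet_Iio,
        show Ioc (0:ℝ) 1 ∩ Iio x = Ioo 0 x by
          ext y
          exact ⟨fun ⟨⟨h1, _⟩, h3⟩ => ⟨h1, h3⟩,
            fun ⟨a, b⟩ => ⟨⟨a, le_trans (le_of_lt b) hx.2⟩, b⟩⟩]
      rw [setIntegral_const]
      simp [Real.volume_Ioo, ENNReal.toReal_ofReal (le_of_lt hx.1)]
      exact le_of_lt hx.1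
  rw [e1, e2, e3, e4]; ring


theorem stmt8 {Ω : Type*} [MeasureSpace Ω] [IsProbabilityMeasure (ℙ : Measure Ω)]
    (S : ℝ) (hS : S ∈ Set.Ico (0:ℝ) 1)
    (X1 X2 : Ω → ℝ) (hX1 : Measurable X1) (hX2 : Measurable X2)
    (hindep : IndepFun X1 X2)
    (hL1 : Measure.map X1 ℙ = mixLaw S) (hL2 : Measure.map X2 ℙ = mixLaw S) :
    (∫ ω, (X1 ω - X2 ω) ∂(ℙ[|{ω | X1 ω ≤ X2 ω}]))
      = -(1/3) * ((1 - S)*(1 + 2*S) / (1 + S^2)) ∧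
    (∫ ω, (X1 ω - X2 ω) ∂(ℙ[|{ω | X2 ω < X1 ω}]))
      = (1/3) * ((1 + 2*S) / (1 + S)) := by
  have hS1 : (0:ℝ) ≤ S := hS.1
  have hS2 : S < 1 := hS.2
  have hφ : Measurable (fun ω => (X1 ω, X2 ω)) := hX1.prodMk hX2
  have hmap : Measure.map (fun ω => (X1 ω, X2 ω)) ℙ = (mixLaw S).prod (mixLaw S) := by
    rw [(indepFun_iff_map_prod_eq_prod_map_map hX1.aemeasurable hX2.aemeasurable).mp hindep,
      hL1, hL2]
  have hg : Continuous (fun p : ℝ × ℝ => p.1 - p.2) := continuous_fst.sub continuous_snd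
  have hden1 : (1:ℝ) + S^2 ≠ 0 := by positivity
  have hden2 : ((1:ℝ) - S) * (1 + S) ≠ 0 := by
    apply mul_ne_zero <;> intro h <;> nlinarith
  constructor
  · have hPA : ℙ {ω | X1 ω ≤ X2 ω} = ((mixLaw S).prod (mixLaw S)) {p : ℝ × ℝ | p.1 ≤ p.2} := by
      rw [show {ω | X1 ω ≤ X2 ω} = (fun ω => (X1 ω, X2 ω)) ⁻¹' {p : ℝ × ℝ | p.1 ≤ p.2} from rfl,
        ← Measure.map_apply hφ hT1, hmap]
    have hInt : ∫ ω in {ω | X1 ω ≤ X2 ω}, (X1 ω - X2 ω) ∂ℙ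
        = ∫ p in {p : ℝ × ℝ | p.1 ≤ p.2}, (p.1 - p.2) ∂((mixLaw S).prod (mixLaw S)) := by
      rw [← hmap, setIntegral_map hT1 hg.aestronglyMeasurable hφ.aemeasurable]; rfl
    have hPt : (((mixLaw S).prod (mixLaw S)) {p : ℝ × ℝ | p.1 ≤ p.2}).toReal = (1 + S^2)/2 := by
      have h := eval_one_le S hS
      rwa [setIntegral_const, smul_eq_mul, mul_one] at h
    rw [show (ℙ[|{ω | X1 ω ≤ X2 ω}])
        = (ℙ {ω | X1 ω ≤ X2 ω})⁻¹ • Measure.restrict ℙ {ω | X1 ω ≤ X2 ω} from rfl,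
      integral_smul_measure, smul_eq_mul, ENNReal.toReal_inv, hPA, hPt, hInt, eval_sub_le S hS]
    field_simp
    ring
  · have hPA : ℙ {ω | X2 ω < X1 ω} = ((mixLaw S).prod (mixLaw S)) {p : ℝ × ℝ | p.2 < p.1} := by
      rw [show {ω | X2 ω < X1 ω} = (fun ω => (X1 ω, X2 ω)) ⁻¹' {p : ℝ × ℝ | p.2 < p.1} from rfl,
        ← Measure.map_apply hφ hT2, hmap]
    have hInt : ∫ ω in {ω | X2 ω < X1 ω}, (X1 ω - X2 ω) ∂ℙ
        = ∫ p in {p : ℝ × ℝ | p.2 < p.1}, (p.1 - p.2) ∂((mixLaw S).prod (mixLaw S)) := by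
      rw [← hmap, setIntegral_map hT2 hg.aestronglyMeasurable hφ.aemeasurable]; rfl
    have hPt : (((mixLaw S).prod (mixLaw S)) {p : ℝ × ℝ | p.2 < p.1}).toReal = (1-S)*(1+S)/2 := by
      have h := eval_one_gt S hS
      rwa [setIntegral_const, smul_eq_mul, mul_one] at h
    rw [show (ℙ[|{ω | X2 ω < X1 ω}])
        = (ℙ {ω | X2 ω < X1 ω})⁻¹ • Measure.restrict ℙ {ω | X2 ω < X1 ω} from rfl,
      integral_smul_measure, smul_eq_mul, ENNReal.toReal_inv, hPA, hPt, hInt, eval_sub_gt S hS]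
    have h1 : (1:ℝ) - S ≠ 0 := by intro h; nlinarith
    have h2 : (1:ℝ) + S ≠ 0 := by intro h; nlinarith
    field_simp
    ring
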